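/- With Σ* the block-equicorrelation matrix as above, the within-group group sums satisfy: the vector (Σ_{i∈G_1} w*_i, …, Σ_{i∈G_K} w*_i) equals (Σ^co)^{-1} 1_K / (1_K' (Σ^co)^{-1} 1_K), and in particular these group sums add up to 1. -/

import Mathlib

open scoped BigOperators
open Matrix

theorem stmt11 {N K : ℕ} (hN : 0 < N) (g : Fin N → Fin K)
    (hsurj : Function.Surjective g)
    (Sco : Matrix (Fin K) (Fin K) ℝ) (hco : Sco.PosDef)
    (Sstar : Matrix (Fin N) (Fin N) ℝ)
    (hblock : ∀ i j, Sstar i j = Sco (g i) (g j))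
    (w : Fin N → ℝ) (γ : ℝ)
    (hsum : (∑ i, w i) = 1)
    (hkkt : Sstar.mulVec w + γ • (fun _ => (1 : ℝ)) = 0)
    (hmin : ∀ (v : Fin N → ℝ) (γ' : ℝ),
      ((∑ i, v i) = 1 ∧ Sstar.mulVec v + γ' • (fun _ => (1 : ℝ)) = 0) →
      ∑ i, (w i)^2 ≤ ∑ i, (v i)^2) :
    (∀ k : Fin K, (∑ i ∈ Finset.univ.filter (fun i => g i = k), w i) =
      (Sco⁻¹.mulVec (fun _ => 1)) k /
        ((fun _ => (1 : ℝ)) ⬝ᵥ Sco⁻¹.mulVec (fun _ => 1))) ∧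
    (∑ k : Fin K, ∑ i ∈ Finset.univ.filter (fun i => g i = k), w i) = 1 := by
  classical
  set s : Fin K → ℝ := fun k => ∑ i ∈ Finset.univ.filter (fun i => g i = k), w i with hs
  -- group sums add to 1
  have hsums : (∑ k, s k) = 1 := by
    rw [hs]
    rw [Finset.sum_fiberwise_eq_sum_filter Finset.univ Finset.univ g w]
    simpa using hsum
  -- KKT per group
  have hSco : Sco.mulVec s = (-γ) • (fun _ => (1 : ℝ)) := by
    funext k
    obtain ⟨i, hi⟩ := hsurj k
    have h1 : Sstar.mulVec w i + γ = 0 := by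
      have := congrFun hkkt i
      simpa using this
    have h2 : Sstar.mulVec w i = Sco.mulVec s k := by
      simp only [mulVec, dotProduct]
      rw [hs]
      simp only [Finset.sum_filter, Finset.mul_sum]
      rw [Finset.sum_comm]
      refine Finset.sum_congr rfl fun j _ => ?_
      rw [hblock, hi]
      simp [mul_ite, mul_zero]
    have : Sco.mulVec s k = -γ := by linarith [h2 ▸ h1]
    simpa using this
  have hinv := hco.inv
  have hdet : IsUnit Sco.det := hco.det_pos.ne'.isUnit
  have hss : s = (-γ) • Sco⁻¹.mulVec (fun _ => (1 : ℝ)) := by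
    have : Sco⁻¹.mulVec (Sco.mulVec s) = s := by
      rw [mulVec_mulVec, Matrix.nonsing_inv_mul _ hdet, one_mulVec]
    rw [← this, hSco, mulVec_smul]
  set c : ℝ := (fun _ => (1 : ℝ)) ⬝ᵥ Sco⁻¹.mulVec (fun _ => 1) with hc
  have hK : 0 < K := Fin.pos_iff_nonempty.mpr ⟨g ⟨0, hN⟩⟩
  have hcpos : 0 < c := by
    have h1 : ((fun _ => (1 : ℝ)) : Fin K → ℝ) ≠ 0 := by
      intro h
      have := congrFun h ⟨0, hK⟩
      simpa using this
    have := hinv.dotProduct_mulVec_pos h1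
    simp only [hc]
    simpa using this
  have hgamma : (-γ) * c = 1 := by
    have : (∑ k, s k) = (-γ) * c := by
      rw [hss, hc]
      simp [dotProduct, Finset.mul_sum]
    linarith [hsums, this]
  constructor
  · intro k
    show s k = _
    rw [hss]
    simp only [Pi.smul_apply, smul_eq_mul]
    rw [eq_div_iff hcpos.ne']
    linear_combination ((Sco⁻¹.mulVec (fun _ => 1)) k) * hgamma
  · exact hsums
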